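/- arXiv:1306.4164 — 5 statements merged into one kernel-verified Lean document; each statement's English description precedes it below -/
import Mathlib

section
/- For every odd integer n ≥ 5, it holds that (3/2)(n² − n + 2) − 4n·H_{(n−1)/2} > 0, where H_k = ∑_{i=1}^{k} 1/i is the k-th harmonic number. -/
open Finset SimpleGraph

/-- Degree of a vertex (number of neighbors). -/
noncomputable def deg {V : Type*} [Fintype V] (G : SimpleGraph V) (v : V) : ℕ :=
  Nat.card {w // G.Adj v w}

open scoped Classical in
/-- Additively weighted Harary index: sum over unordered pairs of distinct
vertices of (deg u + deg v) / d(u,v). -/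
noncomputable def HA {V : Type*} [Fintype V] (G : SimpleGraph V) : ℝ :=
  (1/2) * ∑ u : V, ∑ v : V, if u = v then 0 else
    ((deg G u + deg G v : ℕ) : ℝ) / (G.dist u v)

/-- A unicyclic graph: connected with as many edges as vertices. -/
def Unicyclic {V : Type*} [Fintype V] (G : SimpleGraph V) : Prop :=
  G.Connected ∧ Nat.card G.edgeSet = Fintype.card V

/-- k-th harmonicNum number. -/
noncomputable def harmonicNum (k : ℕ) : ℝ := ∑ i ∈ Finset.range k, (1 : ℝ) / (i + 1)

/-- CS_{3,n-3}: a triangle on vertices 0,1,2 with n-3 leaves attached to vertex 0. -/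
def cycleStar3 (n : ℕ) : SimpleGraph (Fin n) :=
  SimpleGraph.fromRel (fun i j => ((i : ℕ) < 3 ∧ (j : ℕ) < 3) ∨ ((i : ℕ) = 0 ∧ 3 ≤ (j : ℕ)))

/-- CP_{k,n-k}: cycle 0,...,k-1 with the path k,k+1,...,n-1 attached to vertex 0
(for k = n this is just the cycle C_n). -/
def cyclePath (n k : ℕ) : SimpleGraph (Fin n) :=
  SimpleGraph.fromRel (fun i j =>
    ((i : ℕ) < k ∧ (j : ℕ) < k ∧ ((j : ℕ) = (i : ℕ) + 1 ∨ ((i : ℕ) = 0 ∧ (j : ℕ) = k - 1)))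
    ∨ ((i : ℕ) = 0 ∧ (j : ℕ) = k)
    ∨ (k ≤ (i : ℕ) ∧ (j : ℕ) = (i : ℕ) + 1))

/-- A vertex lies on a cycle of G. -/
def OnCycle {V : Type*} (G : SimpleGraph V) (v : V) : Prop :=
  ∃ p : G.Walk v v, p.IsCycle

/-- Cycle-star graph: unicyclic, and every vertex of degree ≥ 2 lies on the cycle
(equivalently, every non-cycle vertex is a leaf attached to a cycle vertex). -/
def IsCycleStar {V : Type*} [Fintype V] (G : SimpleGraph V) : Prop :=
  Unicyclic G ∧ ∀ v, 2 ≤ deg G v → OnCycle G v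

/-- Cycle-path graph: unicyclic, cycle vertices have degree ≤ 3 and non-cycle
vertices have degree ≤ 2 (at most one pendant path per cycle vertex). -/
def IsCyclePath {V : Type*} [Fintype V] (G : SimpleGraph V) : Prop :=
  Unicyclic G ∧ ∀ v, (OnCycle G v → deg G v ≤ 3) ∧ (¬ OnCycle G v → deg G v ≤ 2)

/-- Length of the unique cycle of a unicyclic graph: number of vertices on a cycle. -/
noncomputable def cycleLength {V : Type*} [Fintype V] (G : SimpleGraph V) : ℕ :=
  Nat.card {v // OnCycle G v}

/-- Value of H_A(CP_{3,n-3}). -/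
noncomputable def CPval (n : ℕ) : ℝ :=
  4 * ∑ i ∈ Finset.range (n - 2), harmonicNum (n - i - 2)
    + harmonicNum (n - 3) + 3 * harmonicNum (n - 2) + (6 * (n : ℝ) - 13) / ((n : ℝ) - 2)

lemma harm_le_half (k : ℕ) (hk : 1 ≤ k) : harmonicNum k ≤ ((k : ℝ) + 1) / 2 := by
  induction k with
  | zero => omega
  | succ m ih =>
    rcases Nat.eq_or_lt_of_le hk with h | h
    · simp [harmonicNum, ← h]
    · have hm : 1 ≤ m := by omega
      have := ih hm
      unfold harmonicNum at *
      rw [Finset.sum_range_succ]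
      have hmr : (1 : ℝ) ≤ (m : ℝ) := by exact_mod_cast hm
      have h1 : (1 : ℝ) / (m + 1) ≤ 1 / 2 := by
        apply div_le_div_of_nonneg_left <;> linarith
      push_cast
      linarith

theorem stmt0 (n : ℕ) (hn : 5 ≤ n) (hodd : Odd n) :
    (3 / 2 : ℝ) * ((n : ℝ) ^ 2 - n + 2) - 4 * n * harmonicNum ((n - 1) / 2) > 0 := by
  obtain ⟨k, hk⟩ := hodd
  have hkeq : (n - 1) / 2 = k := by omega
  have hk2 : 2 ≤ k := by omega
  rw [hkeq]
  have hb := harm_le_half k (by omega)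
  have hkr : (2 : ℝ) ≤ (k : ℝ) := by exact_mod_cast hk2
  have hn : (n : ℝ) = 2 * k + 1 := by rw [hk]; push_cast; ring
  rw [hn]
  nlinarith [hb, hkr]
end

section
/- The additively weighted Harary index of the cycle-star graph CS_{3,n−3} equals (3/2)(n² − n + 2) for every integer n ≥ 3. -/
open Finset SimpleGraph

lemma adj_iff {n : ℕ} (u v : Fin n) : (cycleStar3 n).Adj u v ↔
    u ≠ v ∧ ((u : ℕ) = 0 ∨ (v : ℕ) = 0 ∨ ((u : ℕ) < 3 ∧ (v : ℕ) < 3)) := by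
  simp only [cycleStar3, SimpleGraph.fromRel_adj]
  exact and_congr_right fun h => by omega

open scoped Classical in
lemma deg_eq' {V : Type*} [Fintype V] (G : SimpleGraph V) (v : V) :
    deg G v = (Finset.univ.filter (fun w => G.Adj v w)).card := by
  rw [deg, Nat.card_eq_fintype_card, Fintype.card_subtype]

open scoped Classical

lemma filter3 {n : ℕ} (hn : 3 ≤ n) :
    (Finset.univ.filter (fun w : Fin n => (w : ℕ) < 3)) =
      {⟨0, by omega⟩, ⟨1, by omega⟩, ⟨2, by omega⟩} := by
  ext w; simp [Fin.ext_iff]; omega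

lemma card_filter3 {n : ℕ} (hn : 3 ≤ n) :
    (Finset.univ.filter (fun w : Fin n => (w : ℕ) < 3)).card = 3 := by
  rw [filter3 hn]
  rw [Finset.card_insert_of_notMem (by simp [Fin.ext_iff]),
    Finset.card_insert_of_notMem (by simp [Fin.ext_iff]), Finset.card_singleton]

lemma filter0 {n : ℕ} (hn : 3 ≤ n) :
    (Finset.univ.filter (fun w : Fin n => (w : ℕ) = 0)) = {⟨0, by omega⟩} := by
  ext w; simp [Fin.ext_iff]

lemma deg_cs {n : ℕ} (hn : 3 ≤ n) (v : Fin n) :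
    deg (cycleStar3 n) v = if (v : ℕ) = 0 then n - 1 else if (v : ℕ) < 3 then 2 else 1 := by
  rw [deg_eq']
  by_cases h0 : (v : ℕ) = 0
  · rw [if_pos h0]
    have : (Finset.univ.filter (fun w => (cycleStar3 n).Adj v w)) = Finset.univ.erase v := by
      ext w
      simp only [Finset.mem_filter, Finset.mem_univ, true_and, Finset.mem_erase, adj_iff,
        Ne, Fin.ext_iff]
      exact ⟨fun h => ⟨fun hh => h.1 hh.symm, trivial⟩,
        fun h => ⟨fun hh => h.1 hh.symm, Or.inl h0⟩⟩
    rw [this, Finset.card_erase_of_mem (Finset.mem_univ v), Finset.card_univ, Fintype.card_fin]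
  · rw [if_neg h0]
    by_cases h3 : (v : ℕ) < 3
    · rw [if_pos h3]
      have : (Finset.univ.filter (fun w => (cycleStar3 n).Adj v w)) =
          (Finset.univ.filter (fun w : Fin n => (w : ℕ) < 3)).erase v := by
        ext w
        simp only [Finset.mem_filter, Finset.mem_univ, true_and, Finset.mem_erase, adj_iff,
          Ne, Fin.ext_iff]
        omega
      rw [this, Finset.card_erase_of_mem (by simp [h3]), card_filter3 hn]
    · rw [if_neg h3]
      have : (Finset.univ.filter (fun w => (cycleStar3 n).Adj v w)) =
          (Finset.univ.filter (fun w : Fin n => (w : ℕ) = 0)) := by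
        ext w
        simp only [Finset.mem_filter, Finset.mem_univ, true_and, adj_iff, Ne, Fin.ext_iff]
        omega
      rw [this, filter0 hn, Finset.card_singleton]

lemma dist_cs_adj {n : ℕ} {u v : Fin n} (h : (cycleStar3 n).Adj u v) :
    (cycleStar3 n).dist u v = 1 := SimpleGraph.dist_eq_one_iff_adj.mpr h

lemma dist_cs_nonadj {n : ℕ} (hn : 3 ≤ n) {u v : Fin n} (hne : u ≠ v)
    (h : ¬ (cycleStar3 n).Adj u v) : (cycleStar3 n).dist u v = 2 := by
  have hu0 : (u : ℕ) ≠ 0 := by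
    intro h0; exact h ((adj_iff u v).mpr ⟨hne, Or.inl h0⟩)
  have hv0 : (v : ℕ) ≠ 0 := by
    intro h0; exact h ((adj_iff u v).mpr ⟨hne, Or.inr (Or.inl h0)⟩)
  set z : Fin n := ⟨0, by omega⟩ with hz
  have h1 : (cycleStar3 n).Adj u z := (adj_iff u z).mpr
    ⟨by simp [hz, Fin.ext_iff]; omega, Or.inr (Or.inl rfl)⟩
  have h2 : (cycleStar3 n).Adj z v := (adj_iff z v).mpr
    ⟨by simp [hz, Fin.ext_iff]; omega, Or.inl rfl⟩
  have hle : (cycleStar3 n).dist u v ≤ 2 := by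
    have := SimpleGraph.dist_le (SimpleGraph.Walk.cons h1 (SimpleGraph.Walk.cons h2 SimpleGraph.Walk.nil))
    simpa using this
  have hpos : (cycleStar3 n).dist u v ≠ 0 := by
    rw [Ne, SimpleGraph.dist_eq_zero_iff_eq_or_not_reachable]
    push_neg
    exact ⟨hne, ⟨(SimpleGraph.Walk.cons h1 (SimpleGraph.Walk.cons h2 SimpleGraph.Walk.nil))⟩⟩
  have hone : (cycleStar3 n).dist u v ≠ 1 := fun hh => h (SimpleGraph.dist_eq_one_iff_adj.mp hh)
  omega

noncomputable def D (n : ℕ) (v : Fin n) : ℝ :=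
  if (v : ℕ) = 0 then (n : ℝ) - 1 else if (v : ℕ) < 3 then 2 else 1

lemma sumD {n : ℕ} (hn : 3 ≤ n) : ∑ v : Fin n, D n v = 2 * n := by
  have hpt : ∀ v : Fin n, D n v =
      1 + (if (v : ℕ) < 3 then (1:ℝ) else 0) + (if (v : ℕ) = 0 then (n:ℝ) - 3 else 0) := by
    intro v
    unfold D
    split_ifs <;> first | (exfalso; omega) | ring
  rw [Finset.sum_congr rfl fun v _ => hpt v]
  rw [Finset.sum_add_distrib, Finset.sum_add_distrib, Finset.sum_const, Finset.sum_boole]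
  have h2 : ∑ v : Fin n, (if (v : ℕ) = 0 then (n:ℝ) - 3 else 0) = (n:ℝ) - 3 := by
    classical
    rw [← Finset.sum_filter, filter0 hn, Finset.sum_singleton]
  rw [h2, card_filter3 hn]
  simp
  ring

lemma degR {n : ℕ} (hn : 3 ≤ n) (v : Fin n) : ((deg (cycleStar3 n) v : ℕ) : ℝ) = D n v := by
  rw [deg_cs hn, D]
  split_ifs
  · rw [Nat.cast_sub (by omega)]; norm_num
  · norm_num
  · norm_num

lemma nbhd0 {n : ℕ} (v : Fin n) (h0 : (v : ℕ) = 0) :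
    Finset.univ.filter (fun w => (cycleStar3 n).Adj v w) = Finset.univ.erase v := by
  ext w
  simp only [Finset.mem_filter, Finset.mem_univ, true_and, Finset.mem_erase, adj_iff,
    Ne, Fin.ext_iff]
  exact ⟨fun h => ⟨fun hh => h.1 hh.symm, trivial⟩,
    fun h => ⟨fun hh => h.1 hh.symm, Or.inl h0⟩⟩

lemma nbhd12 {n : ℕ} (hn : 3 ≤ n) (v : Fin n) (h0 : (v : ℕ) ≠ 0) (h3 : (v : ℕ) < 3) :
    Finset.univ.filter (fun w => (cycleStar3 n).Adj v w) =
      ({⟨0, by omega⟩, ⟨1, by omega⟩, ⟨2, by omega⟩} : Finset (Fin n)).erase v := by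
  rw [← filter3 hn]
  ext w
  simp only [Finset.mem_filter, Finset.mem_univ, true_and, Finset.mem_erase, adj_iff,
    Ne, Fin.ext_iff]
  omega

lemma nbhd3 {n : ℕ} (hn : 3 ≤ n) (v : Fin n) (h3 : ¬ (v : ℕ) < 3) :
    Finset.univ.filter (fun w => (cycleStar3 n).Adj v w) =
      ({⟨0, by omega⟩} : Finset (Fin n)) := by
  ext w
  simp only [Finset.mem_filter, Finset.mem_univ, true_and, Finset.mem_singleton, adj_iff,
    Ne, Fin.ext_iff]
  omega

lemma sumAll {n : ℕ} (hn : 3 ≤ n) (u : Fin n) :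
    ∑ v : Fin n, (D n u + D n v) / 2 = ((n : ℝ) * D n u + 2 * n) / 2 := by
  rw [← Finset.sum_div, Finset.sum_add_distrib, Finset.sum_const, sumD hn, Finset.card_univ,
    Fintype.card_fin, nsmul_eq_mul]

lemma Dz {n : ℕ} (hn : 3 ≤ n) : D n ⟨0, by omega⟩ = (n : ℝ) - 1 := by simp [D]
lemma D1 {n : ℕ} (hn : 3 ≤ n) : D n ⟨1, by omega⟩ = 2 := by norm_num [D]
lemma D2 {n : ℕ} (hn : 3 ≤ n) : D n ⟨2, by omega⟩ = 2 := by norm_num [D]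

lemma inner1 {n : ℕ} (hn : 3 ≤ n) (u : Fin n) :
    ∑ v : Fin n, (if u = v then (0:ℝ) else (D n u + D n v) / 2)
      = ((n : ℝ) * D n u + 2 * n) / 2 - D n u := by
  have pt : ∀ v : Fin n, (if u = v then (0:ℝ) else (D n u + D n v) / 2)
      = (D n u + D n v) / 2 - (if v = u then (D n u + D n v) / 2 else 0) := by
    intro v
    by_cases h : u = v
    · subst h; simp
    · rw [if_neg h, if_neg (Ne.symm h)]; ring
  rw [Finset.sum_congr rfl fun v _ => pt v, Finset.sum_sub_distrib, ← Finset.sum_filter]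
  have : (Finset.univ.filter (fun v : Fin n => v = u)) = {u} := by ext w; simp
  rw [this, Finset.sum_singleton, sumAll hn u]
  ring

lemma inner2 {n : ℕ} (hn : 3 ≤ n) (u : Fin n) :
    ∑ v : Fin n, (if (cycleStar3 n).Adj u v then (D n u + D n v) / 2 else 0)
      = if (u : ℕ) = 0 then ((n:ℝ) * ((n:ℝ) - 1) + 2 * n) / 2 - ((n:ℝ) - 1)
        else if (u : ℕ) < 3 then ((n:ℝ) + 1) / 2 + 2
        else (n : ℝ) / 2 := by
  classical
  rw [← Finset.sum_filter]
  by_cases h0 : (u : ℕ) = 0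
  · rw [if_pos h0, nbhd0 u h0, Finset.sum_erase_eq_sub (Finset.mem_univ u), sumAll hn u]
    have hD : D n u = (n : ℝ) - 1 := by rw [D, if_pos h0]
    rw [hD]; ring
  · rw [if_neg h0]
    by_cases h3 : (u : ℕ) < 3
    · rw [if_pos h3, nbhd12 hn u h0 h3]
      have hmem : u ∈ ({⟨0, by omega⟩, ⟨1, by omega⟩, ⟨2, by omega⟩} : Finset (Fin n)) := by
        simp [Fin.ext_iff]; omega
      rw [Finset.sum_erase_eq_sub hmem, Finset.sum_insert (by simp [Fin.ext_iff]),
        Finset.sum_insert (by simp [Fin.ext_iff]), Finset.sum_singleton,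
        Dz hn, D1 hn, D2 hn]
      have hD : D n u = 2 := by rw [D, if_neg h0, if_pos h3]
      rw [hD]; ring
    · rw [if_neg h3, nbhd3 hn u h3, Finset.sum_singleton, Dz hn]
      have hD : D n u = 1 := by rw [D, if_neg h0, if_neg h3]
      rw [hD]; ring

theorem stmt2 (n : ℕ) (hn : 3 ≤ n) :
    HA (cycleStar3 n) = (3 / 2 : ℝ) * ((n : ℝ) ^ 2 - n + 2) := by
  classical
  have key : ∀ u v : Fin n,
      (@ite ℝ (u = v) (Classical.propDecidable _) (0:ℝ)
        (((deg (cycleStar3 n) u + deg (cycleStar3 n) v : ℕ) : ℝ) / ((cycleStar3 n).dist u v)))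
      = (if u = v then (0:ℝ) else (D n u + D n v) / 2)
        + (if (cycleStar3 n).Adj u v then (D n u + D n v) / 2 else 0) := by
    intro u v
    by_cases h : u = v
    · subst h; simp [SimpleGraph.irrefl]
    · rw [if_neg h, if_neg h]
      
      by_cases ha : (cycleStar3 n).Adj u v
      · rw [if_pos ha, dist_cs_adj ha]
        push_cast
        rw [degR hn, degR hn]
        ring
      · rw [if_neg ha, dist_cs_nonadj hn h ha]
        push_cast
        rw [degR hn, degR hn]
        ring
  rw [HA]
  rw [Finset.sum_congr rfl fun u (_ : u ∈ Finset.univ) =>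
    Finset.sum_congr rfl fun v (_ : v ∈ Finset.univ) => key u v]
  simp only [Finset.sum_add_distrib]
  rw [Finset.sum_congr rfl fun u _ => inner1 hn u,
    Finset.sum_congr rfl fun u _ => inner2 hn u]
  -- first sum
  have h1 : ∑ u : Fin n, (((n : ℝ) * D n u + 2 * n) / 2 - D n u)
      = ((n:ℝ)/2 - 1) * (2*n) + (n:ℝ) * n := by
    rw [Finset.sum_congr rfl fun u _ =>
      show ((n : ℝ) * D n u + 2 * n) / 2 - D n u = ((n:ℝ)/2 - 1) * D n u + n by ring]
    rw [Finset.sum_add_distrib, ← Finset.mul_sum, sumD hn, Finset.sum_const,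
      Finset.card_univ, Fintype.card_fin, nsmul_eq_mul]
  -- second sum
  set c0 : ℝ := ((n:ℝ) * ((n:ℝ) - 1) + 2 * n) / 2 - ((n:ℝ) - 1) with hc0
  set c1 : ℝ := ((n:ℝ) + 1) / 2 + 2 with hc1
  set c2 : ℝ := (n : ℝ) / 2 with hc2
  have h2 : ∑ u : Fin n, (if (u : ℕ) = 0 then c0 else if (u : ℕ) < 3 then c1 else c2)
      = (n:ℝ) * c2 + 3 * (c1 - c2) + (c0 - c1) := by
    have pt : ∀ u : Fin n, (if (u : ℕ) = 0 then c0 else if (u : ℕ) < 3 then c1 else c2)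
        = c2 + (if (u : ℕ) < 3 then c1 - c2 else 0) + (if (u : ℕ) = 0 then c0 - c1 else 0) := by
      intro u
      split_ifs <;> first | (exfalso; omega) | ring
    rw [Finset.sum_congr rfl fun u _ => pt u, Finset.sum_add_distrib, Finset.sum_add_distrib,
      Finset.sum_const, Finset.card_univ, Fintype.card_fin,
      ← Finset.sum_filter, ← Finset.sum_filter, filter3 hn, filter0 hn,
      Finset.sum_insert (by simp [Fin.ext_iff]), Finset.sum_insert (by simp [Fin.ext_iff]),
      Finset.sum_singleton, Finset.sum_singleton, nsmul_eq_mul]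
    ring
  rw [h1, h2, hc0, hc1, hc2]
  ring
end

section
/- For every odd integer n ≥ 3, the additively weighted Harary index of the cycle C_n equals 4n·H_{(n−1)/2}, where H_k is the k-th harmonic number. -/
open Finset SimpleGraph

open Fin.NatCast Fin.CommRing

lemma walk_up {m : ℕ} (u : Fin (m+2)) (k : ℕ) :
    ∃ p : (cycleGraph (m+2)).Walk u (u + (k : Fin (m+2))), p.length = k := by
  induction k with
  | zero => exact ⟨Walk.nil.copy rfl (by simp), by simp⟩
  | succ k ih =>
    obtain ⟨p, hp⟩ := ih
    have hadj : (cycleGraph (m+2)).Adj (u + (k : Fin (m+2))) (u + (k : Fin (m+2)) + 1) := by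
      rw [cycleGraph_adj]; right; ring
    refine ⟨(p.concat hadj).copy rfl (by push_cast; ring), by simp [hp]⟩

lemma cycle_walk_parity {m : ℕ} {u v : Fin (m+2)} (p : (cycleGraph (m+2)).Walk u v) :
    ∃ k ≤ p.length, v - u = (k : Fin (m+2)) - ((p.length - k : ℕ) : Fin (m+2)) := by
  induction p with
  | nil => exact ⟨0, le_refl 0, by simp⟩
  | @cons u w v h q ih =>
    obtain ⟨k, hk, he⟩ := ih
    rw [cycleGraph_adj] at h
    rw [Walk.length_cons]
    rcases h with h1 | h1
    · -- u - w = 1 : v - u = (v - w) - 1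
      refine ⟨k, by omega, ?_⟩
      have hv : v - u = (v - w) - 1 := by rw [← h1]; ring
      have hl : (q.length + 1 - k : ℕ) = (q.length - k) + 1 := by omega
      rw [hv, he, hl]
      push_cast
      ring
    · -- w - u = 1 : v - u = (v - w) + 1
      refine ⟨k + 1, by omega, ?_⟩
      have hv : v - u = (v - w) + 1 := by rw [← h1]; ring
      have hl : (q.length + 1 - (k + 1) : ℕ) = q.length - k := by omega
      rw [hv, he, hl]
      push_cast
      ring

lemma cycle_dist_lower {m : ℕ} {u v : Fin (m+2)} (p : (cycleGraph (m+2)).Walk u v) :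
    min (v-u).val (u-v).val ≤ p.length := by
  obtain ⟨k, hk, he⟩ := cycle_walk_parity p
  rcases le_or_gt (p.length - k) k with hle | hlt
  · have h1 : v - u = ((k - (p.length - k) : ℕ) : Fin (m+2)) := by
      rw [he, Nat.cast_sub hle]
    have h2 : (v - u).val ≤ k - (p.length - k) := by
      rw [h1, Fin.val_natCast]; exact Nat.mod_le _ _
    exact le_trans (min_le_left _ _) (by omega)
  · have h1 : u - v = (((p.length - k) - k : ℕ) : Fin (m+2)) := by
      have : u - v = ((p.length - k : ℕ) : Fin (m+2)) - (k : Fin (m+2)) := by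
        rw [← neg_sub v u, he]; ring
      rw [this, Nat.cast_sub hlt.le]
    have h2 : (u - v).val ≤ (p.length - k) - k := by
      rw [h1, Fin.val_natCast]; exact Nat.mod_le _ _
    exact le_trans (min_le_right _ _) (by omega)

lemma cycle_dist {m : ℕ} (u v : Fin (m+2)) :
    (cycleGraph (m+2)).dist u v = min (v-u).val (u-v).val := by
  apply le_antisymm
  · apply le_min
    · obtain ⟨p, hp⟩ := walk_up u (v-u).val
      have he : u + (((v-u).val : ℕ) : Fin (m+2)) = v := by
        rw [Fin.cast_val_eq_self]; ring
      calc (cycleGraph (m+2)).dist u v ≤ (p.copy rfl he).length := dist_le _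
        _ = (v-u).val := by simpa using hp
    · rw [SimpleGraph.dist_comm]
      obtain ⟨p, hp⟩ := walk_up v (u-v).val
      have he : v + (((u-v).val : ℕ) : Fin (m+2)) = u := by
        rw [Fin.cast_val_eq_self]; ring
      calc (cycleGraph (m+2)).dist v u ≤ (p.copy rfl he).length := dist_le _
        _ = (u-v).val := by simpa using hp
  · by_cases huv : u = v
    · simp [huv]
    · have hne : (cycleGraph (m+2)).dist u v ≠ 0 := by
        rw [SimpleGraph.dist_ne_zero_iff_ne_and_reachable]
        exact ⟨huv, (cycleGraph_connected (n := m+1)).preconnected u v⟩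
      obtain ⟨p, hp⟩ := SimpleGraph.exists_walk_of_dist_ne_zero hne
      rw [← hp]
      exact cycle_dist_lower p
lemma deg_cycle {m : ℕ} (u : Fin (m+3)) : deg (cycleGraph (m+3)) u = 2 := by
  have h : deg (cycleGraph (m+3)) u = (cycleGraph (m+3)).degree u := by
    rw [deg, ← SimpleGraph.card_neighborSet_eq_degree, Nat.card_eq_fintype_card]
    exact Fintype.card_congr (Equiv.refl _)
  rw [h, cycleGraph_degree_three_le]

lemma key_sum (m : ℕ) :
    ∑ j ∈ range (2*m+1), (if j = 0 then (0:ℝ) else 4 / ((min j (2*m+1-j) : ℕ) : ℝ))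
      = 8 * harmonicNum m := by
  rw [Finset.sum_range_succ']
  simp only [show ∀ i : ℕ, ¬(i + 1 = 0) from fun i => Nat.succ_ne_zero i, if_false, if_pos rfl, add_zero, ite_false, ite_true]
  have h2m : 2*m = m + m := by ring
  rw [h2m, Finset.range_eq_Ico, ← Finset.sum_Ico_consecutive _ (Nat.zero_le m) (Nat.le_add_right m m),
    Finset.sum_Ico_eq_sum_range]
  rw [Finset.sum_Ico_eq_sum_range]
  simp only [Nat.sub_zero, Nat.zero_add, Nat.add_sub_cancel_left]
  have e1 : ∑ i ∈ range m, (4 / ((min (i+1) (m+m+1-(i+1)) : ℕ) : ℝ))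
      = 4 * harmonicNum m := by
    rw [harmonicNum, Finset.mul_sum]
    refine Finset.sum_congr rfl fun i hi => ?_
    rw [Finset.mem_range] at hi
    have : min (i+1) (m+m+1-(i+1)) = i + 1 := by omega
    rw [this]
    push_cast
    ring
  have e2 : ∑ i ∈ range m, (4 / ((min (m+i+1) (m+m+1-(m+i+1)) : ℕ) : ℝ))
      = 4 * harmonicNum m := by
    have estep : ∀ i ∈ range m, (4 / ((min (m+i+1) (m+m+1-(m+i+1)) : ℕ) : ℝ))
        = 4 / ((m - i : ℕ) : ℝ) := by
      intro i hi
      rw [Finset.mem_range] at hi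
      have : min (m+i+1) (m+m+1-(m+i+1)) = m - i := by omega
      rw [this]
    rw [Finset.sum_congr rfl estep, ← Finset.sum_range_reflect]
    rw [harmonicNum, Finset.mul_sum]
    refine Finset.sum_congr rfl fun i hi => ?_
    rw [Finset.mem_range] at hi
    have : m - (m - 1 - i) = i + 1 := by omega
    rw [this]
    push_cast
    ring
  rw [e1] at *
  -- goal now: first part + second part = 8 * harmonicNum m
  rw [e2]
  ring

theorem stmt4 (n : ℕ) (hn : 3 ≤ n) (hodd : Odd n) :
    HA (SimpleGraph.cycleGraph n) = 4 * n * harmonicNum ((n - 1) / 2) := by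
  obtain ⟨m, rfl⟩ : ∃ m, n = 2*m+3 := by
    obtain ⟨k, hk⟩ := hodd
    exact ⟨k - 1, by omega⟩
  have hq : (2*m+3-1)/2 = m+1 := by omega
  rw [hq, HA]
  have hdeg : ∀ w : Fin (2*m+3), deg (cycleGraph (2*m+3)) w = 2 := fun w =>
    deg_cycle (m := 2*m) w
  have inner : ∀ u : Fin (2*m+3),
      (∑ v : Fin (2*m+3), @ite ℝ (u = v) (Classical.propDecidable (u = v)) (0:ℝ)
        (((deg (cycleGraph (2*m+3)) u + deg (cycleGraph (2*m+3)) v : ℕ) : ℝ)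
          / ((cycleGraph (2*m+3)).dist u v)))
      = 8 * harmonicNum (m+1) := by
    intro u
    have ks := key_sum (m+1)
    rw [show 2*(m+1)+1 = 2*m+3 from by ring] at ks
    rw [← ks, ← Fin.sum_univ_eq_sum_range
      (fun j => if j = 0 then (0:ℝ) else 4 / ((min j (2*m+3-j) : ℕ) : ℝ)) (2*m+3)]
    refine (Fintype.sum_equiv (Equiv.addLeft u) _ _ fun w => ?_).symm
    simp only [Equiv.coe_addLeft]
    by_cases hw : w = 0
    · subst hw
      simp
    · have h1 : ¬ (u = u + w) := fun h => hw (by simpa using ((left_eq_add).mp h))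
      have h2 : ¬ ((w : Fin (2*m+3)).val = 0) := fun h => hw (Fin.ext h)
      rw [if_neg h2]; simp only [h1, if_false]
      have hd : (cycleGraph (2*m+3)).dist u (u + w)
          = min ((w : Fin (2*m+3)).val) (2*m+3 - (w : Fin (2*m+3)).val) := by
        have hc := cycle_dist (m := 2*m+1) u (u + w)
        have e1 : u + w - u = w := by ring
        have e2 : u - (u + w) = -w := by ring
        rw [e1, e2] at hc
        rw [hc]
        congr 1
        rw [Fin.coe_neg]
        exact Nat.mod_eq_of_lt (by omega)
      rw [hd, hdeg, hdeg]
      norm_num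
  rw [Finset.sum_congr rfl fun u _ => inner u, Finset.sum_const, Finset.card_univ,
    Fintype.card_fin, nsmul_eq_mul]
  push_cast
  ring
end

section
/- For every odd integer n ≥ 5, the additively weighted Harary index of the cycle C_n is strictly smaller than that of the cycle-star graph CS_{3,n−3}; equivalently, 4n·H_{(n−1)/2} < (3/2)(n² − n + 2). -/
open Finset SimpleGraph

-- indicator sum
lemma sum_ind (n k : ℕ) (h : k < n) : ∑ v : Fin n, (if (v:ℕ) = k then (1:ℝ) else 0) = 1 := by
  classical
  rw [Finset.sum_eq_single (⟨k, h⟩ : Fin n)]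
  · simp
  · intro b _ hb; simp [Fin.ext_iff] at hb ⊢; omega
  · simp

-- harmonic bound
lemma harm_le (k : ℕ) (hk : 1 ≤ k) : harmonicNum k ≤ ((k:ℝ)+1)/2 := by
  induction k with
  | zero => omega
  | succ m ih =>
    by_cases hm0 : m = 0
    · subst hm0
      simp only [harmonicNum, Finset.sum_range_one]
      norm_num
    · have hm : 1 ≤ m := by omega
      have := ih hm
      rw [harmonicNum, Finset.sum_range_succ, ← harmonicNum]
      have h2 : (1:ℝ)/(m+1) ≤ 1/2 := by
        apply div_le_div_of_nonneg_left <;> norm_num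
        exact_mod_cast by omega
      push_cast
      linarith

-- cycleStar3 adjacency
lemma cs_adj {n : ℕ} (u v : Fin n) :
    (cycleStar3 n).Adj u v ↔ u ≠ v ∧ ((u:ℕ) = 0 ∨ (v:ℕ) = 0 ∨ ((u:ℕ) < 3 ∧ (v:ℕ) < 3)) := by
  simp only [cycleStar3, fromRel_adj]
  constructor
  · rintro ⟨h, h2⟩
    refine ⟨h, ?_⟩
    omega
  · rintro ⟨h, h2⟩
    refine ⟨h, ?_⟩
    have : (u:ℕ) ≠ (v:ℕ) := fun hh => h (Fin.ext hh)
    have : (u:ℕ) < n := u.2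
    have : (v:ℕ) < n := v.2
    omega

lemma deg_eq_degree {V : Type*} [Fintype V] (G : SimpleGraph V) [DecidableRel G.Adj] (v : V) :
    deg G v = G.degree v := by
  rw [deg, Nat.card_eq_fintype_card, ← SimpleGraph.card_neighborSet_eq_degree]
  exact Fintype.card_congr (Equiv.refl _)

lemma HA_cycle_le (n : ℕ) (hn : 5 ≤ n) :
    HA (cycleGraph n) ≤ (n:ℝ)^2 + n := by
  classical
  obtain ⟨m, rfl⟩ : ∃ m, n = m + 3 := ⟨n - 3, by omega⟩
  set G := cycleGraph (m+3) with hG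
  have hdeg : ∀ v : Fin (m+3), deg G v = 2 := fun v => by
    rw [deg_eq_degree]; exact cycleGraph_degree_three_le
  have hterm : ∀ u v : Fin (m+3), u ≠ v →
      ((deg G u + deg G v : ℕ) : ℝ) / (G.dist u v)
        ≤ 2 + (if G.Adj u v then 2 else 0) := by
    intro u v huv
    by_cases hadj : G.Adj u v
    · have hd : G.dist u v = 1 := SimpleGraph.dist_eq_one_iff_adj.mpr hadj
      rw [hd, hdeg, hdeg]
      simp [hadj]
      norm_num
    · simp only [hadj, if_false, add_zero]
      rw [hdeg, hdeg]
      rcases Nat.eq_zero_or_pos (G.dist u v) with h0 | hpos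
      · rw [h0]; norm_num
      · have h2 : 2 ≤ G.dist u v := by
          by_contra h
          push_neg at h
          have h1 : G.dist u v = 1 := by omega
          exact hadj (SimpleGraph.dist_eq_one_iff_adj.mp h1)
        have hd2 : (2:ℝ) ≤ (G.dist u v : ℝ) := by exact_mod_cast h2
        rw [div_le_iff₀ (by linarith)]
        push_cast
        nlinarith
  have hrow : ∀ u : Fin (m+3),
      (∑ v : Fin (m+3), ((if u = v then (0:ℝ) else 2) + (if G.Adj u v then 2 else 0)))
        = 2 * (m+3) - 2 + 2 * (G.degree u) := by
    intro u
    rw [Finset.sum_add_distrib]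
    have h1 : ∑ v : Fin (m+3), (if u = v then (0:ℝ) else 2)
        = 2 * (m+3) - 2 := by
      have : ∀ v : Fin (m+3), (if u = v then (0:ℝ) else 2) = 2 - (if u = v then 2 else 0) := by
        intro v; by_cases h : u = v <;> simp [h]
      simp_rw [this]
      rw [Finset.sum_sub_distrib, Finset.sum_ite_eq]
      simp [Finset.card_univ]
      ring
    have h2 : ∑ v : Fin (m+3), (if G.Adj u v then (2:ℝ) else 0) = 2 * (G.degree u) := by
      rw [← Finset.sum_filter]
      have : Finset.univ.filter (G.Adj u) = G.neighborFinset u := by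
        ext w; simp
      rw [this, Finset.sum_const, SimpleGraph.degree]
      simp [mul_comm]
    rw [h1, h2]
  have hsum : HA G ≤ (1/2) * ∑ u : Fin (m+3), (2 * ((m:ℝ)+3) - 2 + 2 * (G.degree u)) := by
    rw [HA]
    apply mul_le_mul_of_nonneg_left _ (by norm_num)
    apply Finset.sum_le_sum
    intro u _
    refine le_trans (b := ∑ v : Fin (m+3),
        ((if u = v then (0:ℝ) else 2) + (if G.Adj u v then 2 else 0))) ?_ ?_
    · apply Finset.sum_le_sum
      intro v _
      by_cases huv : u = v
      · subst huv
        simp [G.irrefl]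
      · simp only [if_neg huv]
        exact hterm u v huv
    · rw [hrow u]
  have hdeg2 : ∀ u : Fin (m+3), G.degree u = 2 := fun u => cycleGraph_degree_three_le
  calc HA G ≤ (1/2) * ∑ u : Fin (m+3), (2 * ((m:ℝ)+3) - 2 + 2 * (G.degree u)) := hsum
    _ = ((m+3:ℕ):ℝ)^2 + ((m+3:ℕ):ℝ) := by
        simp_rw [hdeg2]
        rw [Finset.sum_const, Finset.card_univ]
        simp
        push_cast
        ring


noncomputable def cfun (n : ℕ) (v : Fin n) : ℝ :=
  ((n:ℝ)-1) * (if (v:ℕ) = 0 then 1 else 0) + (1/2) * (if (v:ℕ) = 1 then 1 else 0)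
    + (1/2) * (if (v:ℕ) = 2 then 1 else 0)

noncomputable def bfun (n : ℕ) (u v : Fin n) : ℝ :=
  2 * ((if (u:ℕ) = 1 then 1 else 0) * (if (v:ℕ) = 2 then 1 else 0))
    + 2 * ((if (u:ℕ) = 2 then 1 else 0) * (if (v:ℕ) = 1 then 1 else 0))

lemma HA_cs_ge (n : ℕ) (hn : 5 ≤ n) :
    (3*(n:ℝ)^2 - 3*n + 4)/2 ≤ HA (cycleStar3 n) := by
  classical
  set G := cycleStar3 n with hG
  set z : Fin n := ⟨0, by omega⟩ with hz
  -- adjacency with z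
  have hadjz : ∀ v : Fin n, v ≠ z → G.Adj z v := by
    intro v hv
    exact (cs_adj z v).mpr ⟨fun h => hv h.symm, Or.inl rfl⟩
  -- degree lower bounds
  have hdeg1 : ∀ v : Fin n, v ≠ z → 1 ≤ deg G v := by
    intro v hv
    rw [deg, Nat.card_eq_fintype_card]
    exact Fintype.card_pos_iff.mpr ⟨⟨z, ((hadjz v hv).symm : G.Adj v z)⟩⟩
  have hdeg2 : ∀ v : Fin n, (v:ℕ) = 1 ∨ (v:ℕ) = 2 → 2 ≤ deg G v := by
    intro v hv
    rw [deg, Nat.card_eq_fintype_card]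
    rw [show (2:ℕ) = 1 + 1 from rfl, Nat.add_one_le_iff]
    apply Fintype.one_lt_card_iff.mpr
    have h1 : G.Adj v z := by
      apply ((cs_adj v z).mpr ⟨?_, Or.inr (Or.inl rfl)⟩)
      intro h; rw [h] at hv; simp [hz] at hv
    have h2 : G.Adj v ⟨3 - (v:ℕ), by omega⟩ := by
      apply (cs_adj v _).mpr
      constructor
      · intro h
        have := congrArg Fin.val h
        simp at this; omega
      · right; right
        constructor
        · omega
        · simp; omega
    refine ⟨⟨z, h1⟩, ⟨⟨3 - (v:ℕ), by omega⟩, h2⟩, ?_⟩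
    intro h
    have := congrArg (fun x => ((x : {w // G.Adj v w}) : Fin n).val) h
    simp [hz] at this
    omega
  have hdegz : (n:ℝ) - 1 ≤ (deg G z : ℝ) := by
    have : n - 1 ≤ deg G z := by
      rw [deg, Nat.card_eq_fintype_card]
      have hinj : Function.Injective
          (fun w : {w : Fin n // w ≠ z} => (⟨w.1, hadjz w.1 w.2⟩ : {w // G.Adj z w})) := by
        intro a b hab
        simpa [Subtype.ext_iff] using hab
      have := Fintype.card_le_of_injective _ hinj
      have hcard : Fintype.card {w : Fin n // w ≠ z} = n - 1 := by
        rw [Fintype.card_subtype_compl]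
        simp
      omega
    have h1 : (1:ℝ) ≤ n := by exact_mod_cast (by omega : 1 ≤ n)
    calc (n:ℝ) - 1 = ((n - 1 : ℕ) : ℝ) := by
          push_cast [Nat.cast_sub (by omega : 1 ≤ n)]; ring
      _ ≤ (deg G z : ℝ) := by exact_mod_cast this
  -- distance facts
  have hdistz : ∀ v : Fin n, v ≠ z → G.dist z v = 1 := fun v hv =>
    SimpleGraph.dist_eq_one_iff_adj.mpr (hadjz v hv)
  have hdist2 : ∀ u v : Fin n, u ≠ z → v ≠ z → u ≠ v →
      1 ≤ G.dist u v ∧ G.dist u v ≤ 2 := by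
    intro u v hu hv huv
    have h1 : G.Adj u z := (hadjz u hu).symm
    have h2 : G.Adj z v := hadjz v hv
    constructor
    · exact SimpleGraph.Reachable.pos_dist_of_ne
        ⟨SimpleGraph.Walk.cons h1 (SimpleGraph.Walk.cons h2 SimpleGraph.Walk.nil)⟩ huv
    · simpa using SimpleGraph.dist_le
        (SimpleGraph.Walk.cons h1 (SimpleGraph.Walk.cons h2 SimpleGraph.Walk.nil))
  have hn1 : (1:ℝ) ≤ (n:ℝ) := by exact_mod_cast (by omega : 1 ≤ n)
  have hvz : ∀ w : Fin n, w ≠ z ↔ (w:ℕ) ≠ 0 := by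
    intro w
    constructor
    · intro h h0; exact h (Fin.ext h0)
    · intro h0 h; exact h0 (congrArg Fin.val h)
  -- real degree bound
  have hcnn : ∀ w : Fin n, 0 ≤ cfun n w := by
    intro w
    unfold cfun
    have : (0:ℝ) ≤ (n:ℝ) - 1 := by linarith
    positivity
  have hcreal : ∀ w : Fin n, w ≠ z → 1 + 2 * cfun n w ≤ (deg G w : ℝ) := by
    intro w hw
    have h0 : (w:ℕ) ≠ 0 := (hvz w).mp hw
    rcases (by omega : (w:ℕ) = 1 ∨ (w:ℕ) = 2 ∨ 3 ≤ (w:ℕ)) with h | h | h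
    · have := hdeg2 w (Or.inl h)
      have hr : (2:ℝ) ≤ (deg G w : ℝ) := by exact_mod_cast this
      simp [cfun, h]
      linarith
    · have := hdeg2 w (Or.inr h)
      have hr : (2:ℝ) ≤ (deg G w : ℝ) := by exact_mod_cast this
      simp [cfun, h]
      linarith
    · have := hdeg1 w hw
      have hr : (1:ℝ) ≤ (deg G w : ℝ) := by exact_mod_cast this
      have e1 : ((w:ℕ) = 0) = False := by simp; omega
      have e2 : ((w:ℕ) = 1) = False := by simp; omega
      have e3 : ((w:ℕ) = 2) = False := by simp; omega
      simp [cfun, e1, e2, e3]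
      linarith
  -- termwise lower bound
  have hterm : ∀ u v : Fin n, u ≠ v →
      1 + cfun n u + cfun n v + bfun n u v ≤ ((deg G u + deg G v : ℕ) : ℝ) / (G.dist u v) := by
    intro u v huv
    by_cases hu : u = z
    · subst hu
      have hvne : v ≠ z := fun h => huv h.symm
      rw [hdistz v hvne]
      push_cast
      have h1 := hcreal v hvne
      have hcz : cfun n z = (n:ℝ) - 1 := by simp [cfun, hz]
      have hbz : bfun n z v = 0 := by simp [bfun, hz]
      rw [hcz, hbz]
      have := hcnn v
      simp only [Nat.cast_one, div_one]
      linarith [hdegz]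
    · by_cases hv : v = z
      · subst hv
        rw [SimpleGraph.dist_comm, hdistz u hu]
        push_cast
        have h1 := hcreal u hu
        have hcz : cfun n z = (n:ℝ) - 1 := by simp [cfun, hz]
        have hbz : bfun n u z = 0 := by simp [bfun, hz]
        rw [hcz, hbz]
        have := hcnn u
        simp only [Nat.cast_one, div_one]
        linarith [hdegz]
      · have hu0 : (u:ℕ) ≠ 0 := (hvz u).mp hu
        have hv0 : (v:ℕ) ≠ 0 := (hvz v).mp hv
        have hd2 : (2:ℝ) ≤ (deg G u : ℝ) + (deg G v : ℝ) := by
          have := hdeg1 u hu; have := hdeg1 v hv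
          have h1 : (1:ℝ) ≤ (deg G u : ℝ) := by exact_mod_cast hdeg1 u hu
          have h2 : (1:ℝ) ≤ (deg G v : ℝ) := by exact_mod_cast hdeg1 v hv
          linarith
        by_cases hb : ((u:ℕ) = 1 ∧ (v:ℕ) = 2) ∨ ((u:ℕ) = 2 ∧ (v:ℕ) = 1)
        · -- the pair {1,2}: distance 1
          have hadj : G.Adj u v := by
            apply (cs_adj u v).mpr
            exact ⟨huv, Or.inr (Or.inr ⟨by omega, by omega⟩)⟩
          rw [SimpleGraph.dist_eq_one_iff_adj.mpr hadj]
          push_cast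
          simp only [div_one]
          have h1 : (2:ℝ) ≤ (deg G u : ℝ) := by
            exact_mod_cast hdeg2 u (by omega)
          have h2 : (2:ℝ) ≤ (deg G v : ℝ) := by
            exact_mod_cast hdeg2 v (by omega)
          rcases hb with ⟨e1, e2⟩ | ⟨e1, e2⟩ <;> simp [cfun, bfun, e1, e2] <;> linarith
        · -- generic pair: distance in [1,2]
          obtain ⟨hge1, hle2⟩ := hdist2 u v hu hv huv
          have hbz : bfun n u v = 0 := by
            unfold bfun
            by_cases e1 : (u:ℕ) = 1 <;> by_cases e2 : (v:ℕ) = 2 <;>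
              by_cases e3 : (u:ℕ) = 2 <;> by_cases e4 : (v:ℕ) = 1 <;>
              simp [e1, e2, e3, e4] <;> omega
          rw [hbz, add_zero]
          have hdr1 : (1:ℝ) ≤ (G.dist u v : ℝ) := by exact_mod_cast hge1
          have hdr2 : (G.dist u v : ℝ) ≤ 2 := by exact_mod_cast hle2
          have hstep : ((deg G u + deg G v : ℕ) : ℝ) / 2
              ≤ ((deg G u + deg G v : ℕ) : ℝ) / (G.dist u v) := by
            apply div_le_div_of_nonneg_left _ (by linarith) hdr2
            positivity
          refine le_trans ?_ hstep
          push_cast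
          have h1 := hcreal u hu
          have h2 := hcreal v hv
          rw [le_div_iff₀ (by norm_num : (0:ℝ) < 2)]
          linarith
  -- sum computations
  have hSc : ∑ v : Fin n, cfun n v = (n:ℝ) := by
    unfold cfun
    rw [Finset.sum_add_distrib, Finset.sum_add_distrib]
    simp only [← Finset.mul_sum]
    rw [sum_ind n 0 (by omega), sum_ind n 1 (by omega), sum_ind n 2 (by omega)]
    ring
  have hSb : ∀ u : Fin n, ∑ v : Fin n, bfun n u v
      = 2 * (if (u:ℕ) = 1 then (1:ℝ) else 0) + 2 * (if (u:ℕ) = 2 then 1 else 0) := by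
    intro u
    unfold bfun
    rw [Finset.sum_add_distrib]
    simp only [← Finset.mul_sum]
    rw [sum_ind n 2 (by omega), sum_ind n 1 (by omega)]
    ring
  have hbuu : ∀ u : Fin n, bfun n u u = 0 := by
    intro u
    unfold bfun
    by_cases e1 : (u:ℕ) = 1 <;> by_cases e2 : (u:ℕ) = 2 <;> simp [e1, e2] <;> omega
  have hT : ∑ u : Fin n, ∑ v : Fin n,
      (if u = v then (0:ℝ) else (1 + cfun n u + cfun n v + bfun n u v))
      = 3*(n:ℝ)^2 - 3*n + 4 := by
    have hdiag : ∀ u : Fin n,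
        ∑ v : Fin n, (if u = v then (0:ℝ) else (1 + cfun n u + cfun n v + bfun n u v))
        = ∑ v : Fin n, (1 + cfun n u + cfun n v + bfun n u v)
            - (1 + 2 * cfun n u + bfun n u u) := by
      intro u
      have hpt : ∀ v : Fin n, (if u = v then (0:ℝ) else (1 + cfun n u + cfun n v + bfun n u v))
          = (1 + cfun n u + cfun n v + bfun n u v)
            - (if u = v then (1 + cfun n u + cfun n v + bfun n u v) else 0) := by
        intro v; by_cases h : u = v <;> simp [h]
      rw [Finset.sum_congr rfl (fun v _ => hpt v), Finset.sum_sub_distrib, Finset.sum_ite_eq]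
      simp only [Finset.mem_univ, if_true]
      ring_nf
    have hinner : ∀ u : Fin n, ∑ v : Fin n, (1 + cfun n u + cfun n v + bfun n u v)
        = (n:ℝ) * (1 + cfun n u) + n
          + (2 * (if (u:ℕ) = 1 then (1:ℝ) else 0) + 2 * (if (u:ℕ) = 2 then 1 else 0)) := by
      intro u
      rw [Finset.sum_add_distrib, Finset.sum_add_distrib, Finset.sum_add_distrib,
        Finset.sum_const, Finset.sum_const, hSc, hSb u]
      simp only [Finset.card_univ, Fintype.card_fin, nsmul_eq_mul]
      ring
    calc ∑ u : Fin n, ∑ v : Fin n,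
          (if u = v then (0:ℝ) else (1 + cfun n u + cfun n v + bfun n u v))
        = ∑ u : Fin n, ((2*(n:ℝ) - 1) + ((n:ℝ) - 2) * cfun n u
            + (2 * (if (u:ℕ) = 1 then (1:ℝ) else 0) + 2 * (if (u:ℕ) = 2 then 1 else 0))) := by
          apply Finset.sum_congr rfl
          intro u _
          rw [hdiag u, hinner u, hbuu u]
          ring
      _ = 3*(n:ℝ)^2 - 3*n + 4 := by
          rw [Finset.sum_add_distrib, Finset.sum_add_distrib, Finset.sum_add_distrib,
            Finset.sum_const]
          simp only [← Finset.mul_sum]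
          rw [hSc, sum_ind n 1 (by omega), sum_ind n 2 (by omega)]
          simp only [Finset.card_univ, Fintype.card_fin, nsmul_eq_mul]
          ring
  -- final assembly
  rw [HA]
  apply le_trans (le_of_eq (by ring :
    (3*(n:ℝ)^2 - 3*n + 4)/2 = 1/2 * (3*(n:ℝ)^2 - 3*n + 4)))
  apply mul_le_mul_of_nonneg_left _ (by norm_num)
  rw [← hT]
  apply Finset.sum_le_sum
  intro u _
  apply Finset.sum_le_sum
  intro v _
  by_cases h : u = v
  · simp [h]
  · simp only [if_neg h]
    exact hterm u v h

theorem stmt6 (n : ℕ) (hn : 5 ≤ n) (hodd : Odd n) :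
    HA (SimpleGraph.cycleGraph n) < HA (cycleStar3 n) ∧
      4 * (n : ℝ) * harmonicNum ((n - 1) / 2) < (3 / 2 : ℝ) * ((n : ℝ) ^ 2 - n + 2) := by
  obtain ⟨k, hk⟩ := hodd
  have hk2 : 2 ≤ k := by omega
  have hn5 : (5:ℝ) ≤ (n:ℝ) := by exact_mod_cast hn
  have hdiv : (n - 1) / 2 = k := by omega
  have harm : harmonicNum ((n - 1) / 2) ≤ ((k:ℝ) + 1) / 2 := by
    rw [hdiv]; exact harm_le k (by omega)
  have hnk : (n:ℝ) = 2 * (k:ℝ) + 1 := by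
    have : (n:ℕ) = 2 * k + 1 := hk
    exact_mod_cast congrArg (Nat.cast (R := ℝ)) this
  have hle : 4 * (n:ℝ) * harmonicNum ((n - 1) / 2) ≤ (n:ℝ)^2 + n := by
    calc 4 * (n:ℝ) * harmonicNum ((n - 1) / 2)
        ≤ 4 * (n:ℝ) * (((k:ℝ) + 1) / 2) := by
          apply mul_le_mul_of_nonneg_left harm
          positivity
      _ = (n:ℝ)^2 + n := by rw [hnk]; ring
  constructor
  · calc HA (SimpleGraph.cycleGraph n) ≤ (n:ℝ)^2 + n := HA_cycle_le n hn
      _ < (3*(n:ℝ)^2 - 3*n + 4)/2 := by nlinarith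
      _ ≤ HA (cycleStar3 n) := HA_cs_ge n hn
  · calc 4 * (n:ℝ) * harmonicNum ((n - 1) / 2) ≤ (n:ℝ)^2 + n := hle
      _ < (3 / 2 : ℝ) * ((n : ℝ) ^ 2 - n + 2) := by nlinarith
end

section
/- Let G be a unicyclic graph with cycle C and suppose some vertex y not on C has leaf neighbors z_1, …, z_k (k ≥ 1) and a neighbor x on the path toward C, where all leaf neighbors of y are exactly z_1,…,z_k and y has no other descendants. Let G′ be obtained from G by deleting the edges y z_i and adding the edges x z_i for all i. Then H_A(G) < H_A(G′). -/
open Finset SimpleGraph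

section AuxLemmas

variable {V : Type*}

private lemma aux_no_internal {H : SimpleGraph V} {zv pz : V} (huniq : ∀ w, H.Adj zv w → w = pz)
    {b : V} : ∀ {a : V} (p : H.Walk a b), p.IsPath → zv ∈ p.support → zv ≠ a → zv ≠ b → False := by
  intro a p
  induction p with
  | nil => intro _ hs hna _; simp at hs; exact hna hs
  | @cons a c b h q ih =>
    intro hp hs hna hnb
    rw [Walk.support_cons, List.mem_cons] at hs
    rcases hs with h1 | hs
    · exact hna h1
    by_cases hzc : zv = c
    · subst hzc
      have hpa : pz = a := (huniq a h.symm).symm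
      cases q with
      | nil => exact hnb rfl
      | @cons _ w1 _ h' q' =>
        have hw : w1 = pz := huniq _ h'
        have hmem : a ∈ (Walk.cons h' q').support := by
          rw [Walk.support_cons]
          exact List.mem_cons_of_mem _ (by rw [← hpa, ← hw]; exact q'.start_mem_support)
        exact ((Walk.cons_isPath_iff _ _).mp hp).2 hmem
    · exact ih ((Walk.cons_isPath_iff _ _).mp hp).1 hs hzc hnb

private lemma aux_avoid {H : SimpleGraph V} {P : V → Prop}
    (hP : ∀ w, P w → ∃ pz, ∀ b, H.Adj w b → b = pz) {u v : V}
    (hr : H.Reachable u v) (hu : ¬ P u) (hv : ¬ P v) :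
    ∃ p : H.Walk u v, p.length = H.dist u v ∧ ∀ a ∈ p.support, ¬ P a := by
  obtain ⟨p, hp, hl⟩ := hr.exists_path_of_dist
  refine ⟨p, hl, fun a ha hPa => ?_⟩
  obtain ⟨pz, hpz⟩ := hP a hPa
  exact aux_no_internal hpz p hp ha (fun h => hu (h ▸ hPa)) (fun h => hv (h ▸ hPa))

private lemma aux_transfer {H H' : SimpleGraph V} {P : V → Prop}
    (hE : ∀ a b, ¬P a → ¬P b → H.Adj a b → H'.Adj a b) :
    ∀ {u v : V} (p : H.Walk u v), (∀ a ∈ p.support, ¬P a) →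
      ∃ q : H'.Walk u v, q.length = p.length := by
  intro u v p
  induction p with
  | nil => exact fun _ => ⟨Walk.nil, rfl⟩
  | @cons a c b h q ih =>
    intro hav
    have h1 : ¬P a := hav _ (Walk.start_mem_support _)
    have h2 : ¬P c := hav _ (by rw [Walk.support_cons]; exact List.mem_cons_of_mem _ q.start_mem_support)
    obtain ⟨q', hq'⟩ := ih (fun a ha => hav a (by rw [Walk.support_cons]; exact List.mem_cons_of_mem _ ha))
    exact ⟨Walk.cons (hE _ _ h1 h2 h) q', by simp [hq']⟩

private lemma aux_pendant {H : SimpleGraph V} {v p : V} (hadj : H.Adj v p)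
    (huniq : ∀ w, H.Adj v w → w = p) {u : V} (hne : u ≠ v) (hr : H.Reachable u v) :
    H.dist u v = H.dist u p + 1 := by
  have hrp : H.Reachable u p := hr.trans hadj.reachable
  have hle : H.dist u v ≤ H.dist u p + 1 := by
    obtain ⟨w, hw⟩ := hrp.exists_walk_length_eq_dist
    have := dist_le (w.concat hadj.symm)
    rwa [Walk.length_concat, hw] at this
  have hge : H.dist u p + 1 ≤ H.dist u v := by
    obtain ⟨w, hw⟩ := hr.symm.exists_walk_length_eq_dist
    cases w with
    | nil => exact absurd rfl hne.symm
    | @cons _ c _ h q =>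
      obtain rfl : c = p := huniq _ h
      have h2 := dist_le q
      rw [Walk.length_cons] at hw
      have h3 : H.dist u c = H.dist c u := SimpleGraph.dist_comm
      have h4 : H.dist u v = H.dist v u := SimpleGraph.dist_comm
      omega
  omega

private lemma aux_deg_eq_card [Fintype V] (H : SimpleGraph V) (v : V)
    [DecidablePred (H.Adj v)] :
    deg H v = (Finset.univ.filter (fun w => H.Adj v w)).card := by
  rw [deg, Nat.card_eq_fintype_card, Fintype.card_subtype]

private lemma aux_sum_pos_split [Fintype V] [DecidableEq V] (g : V → V → ℝ) (x y u₀ : V)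
    (hxy : x ≠ y)
    (hsymm : ∀ u v, g u v = g v u)
    (hN1 : ∀ u, 0 ≤ g u x + g u y)
    (hstrict : 0 < g u₀ x + g u₀ y)
    (hN2 : ∀ u v, u ≠ x → u ≠ y → v ≠ x → v ≠ y → 0 ≤ g u v) :
    0 < ∑ u : V, ∑ v : V, g u v := by
  set B := Finset.univ \ ({x, y} : Finset V) with hB
  have hsplit : ∀ h : V → ℝ, ∑ v : V, h v = (h x + h y) + ∑ v ∈ B, h v := by
    intro h
    rw [← Finset.sum_sdiff (Finset.subset_univ ({x, y} : Finset V)), Finset.sum_pair hxy, ← hB]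
    ring
  have hBmem : ∀ v ∈ B, v ≠ x ∧ v ≠ y := by
    intro v hv
    rw [hB, Finset.mem_sdiff, Finset.mem_insert, Finset.mem_singleton] at hv
    exact ⟨fun h => hv.2 (Or.inl h), fun h => hv.2 (Or.inr h)⟩
  have e1 : ∑ u : V, ∑ v : V, g u v
      = (∑ u : V, (g u x + g u y)) + ∑ v ∈ B, ∑ u : V, g u v := by
    rw [Finset.sum_congr rfl (fun u _ => hsplit (g u)), Finset.sum_add_distrib, Finset.sum_comm]
  have e2 : ∑ v ∈ B, ∑ u : V, g u v
      = (∑ v ∈ B, (g x v + g y v)) + ∑ v ∈ B, ∑ u ∈ B, g u v := by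
    rw [Finset.sum_congr rfl (fun v _ => hsplit (fun u => g u v)), Finset.sum_add_distrib]
  have hS1 : 0 < ∑ u : V, (g u x + g u y) :=
    Finset.sum_pos' (fun u _ => hN1 u) ⟨u₀, Finset.mem_univ _, hstrict⟩
  have hS2 : 0 ≤ ∑ v ∈ B, (g x v + g y v) := by
    apply Finset.sum_nonneg
    intro v hv
    rw [hsymm x v, hsymm y v]
    exact hN1 v
  have hS3 : 0 ≤ ∑ v ∈ B, ∑ u ∈ B, g u v := by
    apply Finset.sum_nonneg
    intro v hv
    apply Finset.sum_nonneg
    intro u hu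
    exact hN2 u v (hBmem u hu).1 (hBmem u hu).2 (hBmem v hv).1 (hBmem v hv).2
  rw [e1, e2]
  linarith

private lemma aux_half_lt {V : Type*} [Fintype V] (F F' : V → V → ℝ)
    (h : 0 < ∑ u : V, ∑ v : V, (F' u v - F u v)) :
    (1/2 : ℝ) * (∑ u : V, ∑ v : V, F u v) < (1/2 : ℝ) * (∑ u : V, ∑ v : V, F' u v) := by
  have e : ∑ u : V, ∑ v : V, (F' u v - F u v)
      = (∑ u : V, ∑ v : V, F' u v) - ∑ u : V, ∑ v : V, F u v := by
    rw [← Finset.sum_sub_distrib]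
    exact Finset.sum_congr rfl fun u _ => Finset.sum_sub_distrib _ _
  rw [e] at h
  linarith

end AuxLemmas
theorem stmt11 {V : Type*} [Fintype V] (G G' : SimpleGraph V) (hG : Unicyclic G)
    (x y : V) (k : ℕ) (hk : 1 ≤ k) (z : Fin k → V) (hz : Function.Injective z)
    (hyC : ¬ OnCycle G y) (hxy : G.Adj x y)
    (hleaf : ∀ i, G.Adj y (z i) ∧ deg G (z i) = 1)
    (hnbr : ∀ w, G.Adj y w ↔ w = x ∨ ∃ i, w = z i)
    (hG' : ∀ a b, G'.Adj a b ↔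
      ((G.Adj a b ∧ ¬ ∃ i, (a = y ∧ b = z i) ∨ (b = y ∧ a = z i))
        ∨ ∃ i, (a = x ∧ b = z i) ∨ (b = x ∧ a = z i))) :
    HA G < HA G' := by

  classical
  have hcon : G.Connected := hG.1
  have hxny : x ≠ y := hxy.ne
  have hziy : ∀ i, G.Adj y (z i) := fun i => (hleaf i).1
  have hyz : ∀ i, y ≠ z i := fun i => (hziy i).ne
  have hziN : ∀ (i : Fin k) (w : V), G.Adj (z i) w → w = y := by
    intro i w hw
    have hfil : (Finset.univ.filter (fun b => G.Adj (z i) b)).card = 1 := by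
      rw [← aux_deg_eq_card]; exact (hleaf i).2
    obtain ⟨a, ha⟩ := Finset.card_eq_one.mp hfil
    have hy : y ∈ ({a} : Finset V) := by
      rw [← ha]; simp only [Finset.mem_filter, Finset.mem_univ, true_and]
      exact (hziy i).symm
    have hww : w ∈ ({a} : Finset V) := by
      rw [← ha]; simp only [Finset.mem_filter, Finset.mem_univ, true_and]; exact hw
    rw [Finset.mem_singleton] at hy hww
    rw [hww, ← hy]
  have hxz : ∀ i, x ≠ z i := by
    intro i h
    exact G'.irrefl ((hG' x x).mpr (Or.inr ⟨i, Or.inl ⟨rfl, h⟩⟩))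
  have hxzAdj : ∀ i, ¬ G.Adj x (z i) := fun i h => hxny (hziN i x h.symm)
  set Z : V → Prop := fun w => ∃ i, w = z i with hZdef
  have hZx : ¬ Z x := fun ⟨i, hi⟩ => hxz i hi
  have hZy : ¬ Z y := fun ⟨i, hi⟩ => hyz i hi
  -- adjacency in G'
  have hA1 : ∀ b, G'.Adj x b ↔ (G.Adj x b ∨ Z b) := by
    intro b
    rw [hG' x b]
    constructor
    · rintro (⟨hadj, _⟩ | ⟨i, ⟨_, h2⟩ | ⟨_, h2⟩⟩)
      · exact Or.inl hadj
      · exact Or.inr ⟨i, h2⟩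
      · exact absurd h2 (hxz i)
    · rintro (hadj | ⟨i, hi⟩)
      · left
        refine ⟨hadj, ?_⟩
        rintro ⟨i, ⟨h1, _⟩ | ⟨_, h2⟩⟩
        · exact hxny h1
        · exact hxz i h2
      · exact Or.inr ⟨i, Or.inl ⟨rfl, hi⟩⟩
  have hA2 : ∀ b, G'.Adj y b ↔ b = x := by
    intro b
    rw [hG' y b]
    constructor
    · rintro (⟨hadj, hrem⟩ | ⟨i, ⟨h1, _⟩ | ⟨h1, _⟩⟩)
      · rcases (hnbr b).mp hadj with h | ⟨i, hi⟩
        · exact h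
        · exact absurd ⟨i, Or.inl ⟨rfl, hi⟩⟩ hrem
      · exact absurd h1 hxny.symm
      · exact h1
    · rintro rfl
      left
      refine ⟨hxy.symm, ?_⟩
      rintro ⟨i, ⟨_, h2⟩ | ⟨h1, _⟩⟩
      · exact hxz i h2
      · exact hxny h1
  have hA3 : ∀ (i : Fin k) (b : V), G'.Adj (z i) b ↔ b = x := by
    intro i b
    rw [hG' (z i) b]
    constructor
    · rintro (⟨hadj, hrem⟩ | ⟨j, ⟨h1, _⟩ | ⟨h1, _⟩⟩)
      · exact absurd ⟨i, Or.inr ⟨hziN i b hadj, rfl⟩⟩ hrem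
      · exact absurd h1.symm (hxz i)
      · exact h1
    · rintro rfl
      exact Or.inr ⟨i, Or.inr ⟨rfl, rfl⟩⟩
  have hA4 : ∀ u b, u ≠ x → u ≠ y → ¬ Z u → (G'.Adj u b ↔ G.Adj u b) := by
    intro u b h1 h2 h3
    rw [hG' u b]
    constructor
    · rintro (⟨hadj, _⟩ | ⟨i, ⟨h4, _⟩ | ⟨_, h5⟩⟩)
      · exact hadj
      · exact absurd h4 h1
      · exact absurd ⟨i, h5⟩ h3
    · intro hadj
      left
      refine ⟨hadj, ?_⟩
      rintro ⟨i, ⟨h4, _⟩ | ⟨_, h5⟩⟩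
      · exact h2 h4
      · exact h3 ⟨i, h5⟩
  have hE : ∀ a b, ¬ Z a → ¬ Z b → (G.Adj a b ↔ G'.Adj a b) := by
    intro a b ha hb
    rw [hG' a b]
    constructor
    · intro h
      left
      refine ⟨h, ?_⟩
      rintro ⟨i, ⟨_, h2⟩ | ⟨_, h2⟩⟩
      · exact hb ⟨i, h2⟩
      · exact ha ⟨i, h2⟩
    · rintro (⟨h, _⟩ | ⟨i, ⟨_, h2⟩ | ⟨_, h2⟩⟩)
      · exact h
      · exact absurd ⟨i, h2⟩ hb
      · exact absurd ⟨i, h2⟩ ha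
  have hPG : ∀ w, Z w → ∃ p, ∀ b, G.Adj w b → b = p := by
    rintro w ⟨i, rfl⟩
    exact ⟨y, hziN i⟩
  have hPG' : ∀ w, Z w → ∃ p, ∀ b, G'.Adj w b → b = p := by
    rintro w ⟨i, rfl⟩
    exact ⟨x, fun b hb => (hA3 i b).mp hb⟩
  have hdd : ∀ u v : V, ¬ Z u → ¬ Z v → G'.dist u v = G.dist u v ∧ G'.Reachable u v := by
    intro u v hu hv
    obtain ⟨p, hl, hav⟩ := aux_avoid hPG (hcon u v) hu hv
    obtain ⟨q, hq⟩ := aux_transfer (fun a b ha hb h => (hE a b ha hb).mp h) p hav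
    have hr' : G'.Reachable u v := ⟨q⟩
    have le1 : G'.dist u v ≤ G.dist u v := by rw [← hl, ← hq]; exact dist_le q
    obtain ⟨p', hl', hav'⟩ := aux_avoid hPG' hr' hu hv
    obtain ⟨q2, hq2⟩ := aux_transfer (fun a b ha hb h => (hE a b ha hb).mpr h) p' hav'
    have le2 : G.dist u v ≤ G'.dist u v := by rw [← hl', ← hq2]; exact dist_le q2
    exact ⟨le_antisymm le1 le2, hr'⟩
  -- degrees
  have hximg : x ∉ Finset.image z Finset.univ := by
    simp only [Finset.mem_image, Finset.mem_univ, true_and, not_exists]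
    exact fun i h => hxz i h.symm
  have hdgy : deg G y = k + 1 := by
    rw [aux_deg_eq_card]
    have : (Finset.univ.filter (fun w => G.Adj y w)) = insert x (Finset.image z Finset.univ) := by
      ext w
      simp only [Finset.mem_filter, Finset.mem_univ, true_and, Finset.mem_insert,
        Finset.mem_image]
      rw [hnbr w]
      constructor
      · rintro (h | ⟨i, h⟩)
        · exact Or.inl h
        · exact Or.inr ⟨i, h.symm⟩
      · rintro (h | ⟨i, h⟩)
        · exact Or.inl h
        · exact Or.inr ⟨i, h.symm⟩
    rw [this, Finset.card_insert_of_notMem hximg, Finset.card_image_of_injective _ hz,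
      Finset.card_univ, Fintype.card_fin]
  have hdgz : ∀ i, deg G (z i) = 1 := fun i => (hleaf i).2
  have hdg'x : deg G' x = deg G x + k := by
    rw [aux_deg_eq_card, aux_deg_eq_card]
    have : (Finset.univ.filter (fun w => G'.Adj x w))
        = (Finset.univ.filter (fun w => G.Adj x w)) ∪ Finset.image z Finset.univ := by
      ext w
      simp only [Finset.mem_filter, Finset.mem_univ, true_and, Finset.mem_union,
        Finset.mem_image]
      rw [hA1 w]
      constructor
      · rintro (h | ⟨i, h⟩)
        · exact Or.inl h
        · exact Or.inr ⟨i, h.symm⟩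
      · rintro (h | ⟨i, h⟩)
        · exact Or.inl h
        · exact Or.inr ⟨i, h.symm⟩
    rw [this, Finset.card_union_of_disjoint, Finset.card_image_of_injective _ hz,
      Finset.card_univ, Fintype.card_fin]
    rw [Finset.disjoint_left]
    intro w hw hw2
    rw [Finset.mem_filter] at hw
    rw [Finset.mem_image] at hw2
    obtain ⟨i, _, rfl⟩ := hw2
    exact hxzAdj i hw.2
  have hdg'y : deg G' y = 1 := by
    rw [aux_deg_eq_card]
    have : (Finset.univ.filter (fun w => G'.Adj y w)) = {x} := by
      ext w
      simp only [Finset.mem_filter, Finset.mem_univ, true_and, Finset.mem_singleton]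
      exact hA2 w
    rw [this, Finset.card_singleton]
  have hdg'z : ∀ i, deg G' (z i) = 1 := by
    intro i
    rw [aux_deg_eq_card]
    have : (Finset.univ.filter (fun w => G'.Adj (z i) w)) = {x} := by
      ext w
      simp only [Finset.mem_filter, Finset.mem_univ, true_and, Finset.mem_singleton]
      exact hA3 i w
    rw [this, Finset.card_singleton]
  have hdgA : ∀ u, u ≠ x → u ≠ y → ¬ Z u → deg G' u = deg G u := by
    intro u h1 h2 h3
    rw [aux_deg_eq_card, aux_deg_eq_card]
    congr 1
    ext w
    simp only [Finset.mem_filter, Finset.mem_univ, true_and]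
    exact hA4 u w h1 h2 h3
  have hdgx1 : 1 ≤ deg G x := by
    rw [aux_deg_eq_card]
    refine Finset.card_pos.mpr ⟨y, ?_⟩
    simp only [Finset.mem_filter, Finset.mem_univ, true_and]
    exact hxy
  -- adjacencies and distances
  have hAxy' : G'.Adj x y := (hA1 y).mpr (Or.inl hxy)
  have hAxz' : ∀ i, G'.Adj x (z i) := fun i => (hA1 (z i)).mpr (Or.inr ⟨i, rfl⟩)
  have hAzx' : ∀ i, G'.Adj (z i) x := fun i => (hAxz' i).symm
  have hdxy : G.dist x y = 1 := dist_eq_one_iff_adj.mpr hxy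
  have hd'xy : G'.dist x y = 1 := dist_eq_one_iff_adj.mpr hAxy'
  have ylem : ∀ u, u ≠ y → ¬ Z u → G.dist u y = G.dist u x + 1 := by
    intro u huy huZ
    have h1 : G.dist u y ≤ G.dist u x + 1 := by
      obtain ⟨w, hw⟩ := (hcon u x).exists_walk_length_eq_dist
      have := dist_le (w.concat hxy)
      rwa [Walk.length_concat, hw] at this
    have h2 : G.dist u x + 1 ≤ G.dist u y := by
      obtain ⟨w, hw⟩ := (hcon y u).exists_walk_length_eq_dist
      cases w with
      | nil => exact absurd rfl huy
      | @cons _ c _ h q =>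
        rcases (hnbr c).mp h with rfl | ⟨i, rfl⟩
        · have h3 := dist_le q
          rw [Walk.length_cons] at hw
          have e1 : G.dist u c = G.dist c u := SimpleGraph.dist_comm
          have e2 : G.dist u y = G.dist y u := SimpleGraph.dist_comm
          omega
        · cases q with
          | nil => exact (huZ ⟨i, rfl⟩).elim
          | @cons _ c2 _ h' q' =>
            have hc2 : c2 = y := hziN i _ h'
            have h3 : G.dist y u ≤ q'.length := by rw [← hc2]; exact dist_le q'
            rw [Walk.length_cons, Walk.length_cons] at hw
            omega
    omega
  have dzG : ∀ (i : Fin k) (u : V), u ≠ z i → G.dist u (z i) = G.dist u y + 1 :=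
    fun i u hu => aux_pendant (hziy i).symm (hziN i) hu (hcon u (z i))
  have hreach' : ∀ u, ¬ Z u → ∀ i, G'.Reachable u (z i) :=
    fun u hu i => ((hdd u x hu hZx).2).trans (hAxz' i).reachable
  have dzG' : ∀ (i : Fin k) (u : V), u ≠ z i → G'.Reachable u (z i) →
      G'.dist u (z i) = G'.dist u x + 1 :=
    fun i u hu hr => aux_pendant (hAzx' i) (fun b hb => (hA3 i b).mp hb) hu hr
  -- the functions
  set F : V → V → ℝ := fun u v => if u = v then 0 else
    ((deg G u + deg G v : ℕ) : ℝ) / (G.dist u v) with hF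
  set F' : V → V → ℝ := fun u v => if u = v then 0 else
    ((deg G' u + deg G' v : ℕ) : ℝ) / (G'.dist u v) with hF'
  have hFval : ∀ u v, u ≠ v → F u v = ((deg G u + deg G v : ℕ) : ℝ) / (G.dist u v) := by
    intro u v h; rw [hF]; simp only [if_neg h]
  have hF'val : ∀ u v, u ≠ v → F' u v = ((deg G' u + deg G' v : ℕ) : ℝ) / (G'.dist u v) := by
    intro u v h; rw [hF']; simp only [if_neg h]
  have hFd : ∀ u, F u u = 0 := by intro u; rw [hF]; simp
  have hF'd : ∀ u, F' u u = 0 := by intro u; rw [hF']; simp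
  have hFsymm : ∀ u v, F u v = F v u := by
    intro u v
    by_cases h : u = v
    · rw [h]
    · rw [hFval u v h, hFval v u (Ne.symm h)]
      have e : G.dist u v = G.dist v u := SimpleGraph.dist_comm
      rw [e, Nat.add_comm]
  have hF'symm : ∀ u v, F' u v = F' v u := by
    intro u v
    by_cases h : u = v
    · rw [h]
    · rw [hF'val u v h, hF'val v u (Ne.symm h)]
      have e : G'.dist u v = G'.dist v u := SimpleGraph.dist_comm
      rw [e, Nat.add_comm]
  -- key pointwise estimates
  have hApos : ∀ u, u ≠ x → u ≠ y → ¬ Z u → 0 < (F' u x - F u x) + (F' u y - F u y) := by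
    intro u h1 h2 h3
    have hd1 : 1 ≤ G.dist u x := hcon.pos_dist_of_ne h1
    have e2 : G.dist u y = G.dist u x + 1 := ylem u h2 h3
    have e3 : G'.dist u x = G.dist u x := (hdd u x h3 hZx).1
    have e4 : G'.dist u y = G.dist u y := (hdd u y h3 hZy).1
    have e5 : deg G' u = deg G u := hdgA u h1 h2 h3
    rw [hFval u x h1, hFval u y h2, hF'val u x h1, hF'val u y h2, e3, e4, e2, e5, hdg'x,
      hdg'y, hdgy]
    have hd : (1:ℝ) ≤ (G.dist u x : ℝ) := by exact_mod_cast hd1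
    push_cast
    set d : ℝ := (G.dist u x : ℝ) with hdd2
    have hk1 : (1:ℝ) ≤ (k : ℝ) := by exact_mod_cast hk
    have h0 : (0:ℝ) < d := by linarith
    have h01 : (0:ℝ) < d + 1 := by linarith
    have key : (k:ℝ)/(d+1) < (k:ℝ)/d := div_lt_div_of_pos_left (by linarith) h0 (by linarith)
    have ea : ((deg G u : ℝ) + ((deg G x : ℝ) + (k:ℝ))) / d - ((deg G u : ℝ) + (deg G x : ℝ)) / d
        = (k:ℝ)/d := by field_simp; ring
    have eb : ((deg G u : ℝ) + 1) / (d+1) - ((deg G u : ℝ) + ((k:ℝ) + 1)) / (d+1)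
        = -((k:ℝ)/(d+1)) := by field_simp; try ring
    linarith [ea, eb]
  have hAz : ∀ u (i : Fin k), u ≠ x → u ≠ y → ¬ Z u → 0 ≤ F' u (z i) - F u (z i) := by
    intro u i h1 h2 h3
    have hne : u ≠ z i := fun h => h3 ⟨i, h⟩
    have d1 : G.dist u (z i) = G.dist u x + 2 := by
      rw [dzG i u hne, ylem u h2 h3]
    have d2 : G'.dist u (z i) = G.dist u x + 1 := by
      rw [dzG' i u hne (hreach' u h3 i), (hdd u x h3 hZx).1]
    have e5 : deg G' u = deg G u := hdgA u h1 h2 h3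
    rw [hFval u (z i) hne, hF'val u (z i) hne, d1, d2, e5, hdg'z, hdgz]
    have hd : (0:ℝ) ≤ (G.dist u x : ℝ) := by positivity
    push_cast
    set d : ℝ := (G.dist u x : ℝ) with hdd3
    have h1' : (0:ℝ) < d + 1 := by linarith
    have h2' : (0:ℝ) < d + 2 := by linarith
    have key : ((deg G u : ℝ) + 1) / (d + 2) ≤ ((deg G u : ℝ) + 1) / (d + 1) :=
      div_le_div_of_nonneg_left (by positivity) h1' (by linarith)
    linarith
  have hN1 : ∀ u, 0 ≤ (F' u x - F u x) + (F' u y - F u y) := by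
    intro u
    by_cases h1 : u = x
    · subst h1
      have ex : F u y = ((deg G u + (k+1) : ℕ) : ℝ) / ((1:ℕ):ℝ) := by
        rw [hFval u y hxny, hdgy, hdxy]
      have ex' : F' u y = ((deg G u + k + 1 : ℕ) : ℝ) / ((1:ℕ):ℝ) := by
        rw [hF'val u y hxny, hdg'x, hdg'y, hd'xy]
      rw [hFd, hF'd, ex, ex']
      push_cast
      ring_nf
      norm_num
    · by_cases h2 : u = y
      · subst h2
        rw [hF'symm u x, hFsymm u x, hFd, hF'd]
        have ex : F x u = ((deg G x + (k+1) : ℕ) : ℝ) / ((1:ℕ):ℝ) := by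
          rw [hFval x u hxny, hdgy, hdxy]
        have ex' : F' x u = ((deg G' x + 1 : ℕ) : ℝ) / ((1:ℕ):ℝ) := by
          rw [hF'val x u hxny, hdg'y, hd'xy]
        rw [ex, ex', hdg'x]
        push_cast
        ring_nf
        norm_num
      · by_cases h3 : Z u
        · obtain ⟨i, rfl⟩ := h3
          have hne1 : z i ≠ x := fun h => hxz i h.symm
          have hne2 : z i ≠ y := fun h => hyz i h.symm
          have dz_x : G.dist (z i) x = 2 := by
            have e : G.dist (z i) x = G.dist x (z i) := SimpleGraph.dist_comm
            rw [e, dzG i x (hxz i)]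
            have e2 : G.dist x y = 1 := hdxy
            omega
          have d'z_x : G'.dist (z i) x = 1 := dist_eq_one_iff_adj.mpr (hAzx' i)
          have dz_y : G.dist (z i) y = 1 := dist_eq_one_iff_adj.mpr (hziy i).symm
          have d'z_y : G'.dist (z i) y = 2 := by
            have e : G'.dist (z i) y = G'.dist y (z i) := SimpleGraph.dist_comm
            rw [e, dzG' i y (hne2 ∘ Eq.symm ∘ Eq.symm ∘ Eq.symm) (hreach' y hZy i)]
            have e2 : G'.dist y x = 1 := by
              have e3 : G'.dist y x = G'.dist x y := SimpleGraph.dist_comm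
              rw [e3, hd'xy]
            omega
          rw [hFval _ x hne1, hFval _ y hne2, hF'val _ x hne1, hF'val _ y hne2,
            dz_x, d'z_x, dz_y, d'z_y, hdgz, hdgy, hdg'z, hdg'x, hdg'y]
          push_cast
          have hdx : (1:ℝ) ≤ (deg G x : ℝ) := by exact_mod_cast hdgx1
          have hk1 : (1:ℝ) ≤ (k : ℝ) := by exact_mod_cast hk
          norm_num
          linarith
        · exact le_of_lt (hApos u h1 h2 h3)
  have hN2 : ∀ u v, u ≠ x → u ≠ y → v ≠ x → v ≠ y → 0 ≤ F' u v - F u v := by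
    intro u v h1 h2 h3 h4
    by_cases huv : u = v
    · subst huv; rw [hFd, hF'd]; norm_num
    · by_cases hu : Z u
      · by_cases hv : Z v
        · obtain ⟨i, rfl⟩ := hu
          obtain ⟨j, rfl⟩ := hv
          have dzz : G.dist (z i) (z j) = 2 := by
            rw [dzG j (z i) huv]
            have : G.dist (z i) y = 1 := dist_eq_one_iff_adj.mpr (hziy i).symm
            omega
          have d'zz : G'.dist (z i) (z j) = 2 := by
            rw [dzG' j (z i) huv ((hAzx' i).reachable.trans (hAxz' j).reachable)]
            have : G'.dist (z i) x = 1 := dist_eq_one_iff_adj.mpr (hAzx' i)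
            omega
          rw [hFval _ _ huv, hF'val _ _ huv, dzz, d'zz, hdgz, hdgz, hdg'z, hdg'z]
          norm_num
        · obtain ⟨i, rfl⟩ := hu
          rw [hF'symm, hFsymm]
          exact hAz v i h3 h4 hv
      · by_cases hv : Z v
        · obtain ⟨j, rfl⟩ := hv
          exact hAz u j h1 h2 hu
        · have e5 : deg G' u = deg G u := hdgA u h1 h2 hu
          have e6 : deg G' v = deg G v := hdgA v h3 h4 hv
          have e7 : G'.dist u v = G.dist u v := (hdd u v hu hv).1
          rw [hFval u v huv, hF'val u v huv, e5, e6, e7]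
          norm_num
  -- main split
  by_cases hex : ∃ u : V, u ≠ x ∧ u ≠ y ∧ ¬ Z u
  · obtain ⟨u₀, hu1, hu2, hu3⟩ := hex
    simp only [HA]
    apply aux_half_lt F F'
    exact aux_sum_pos_split (fun u v => F' u v - F u v) x y u₀ hxny
      (fun u v => by show F' u v - F u v = F' v u - F v u; rw [hFsymm u v, hF'symm u v])
      hN1 (hApos u₀ hu1 hu2 hu3) hN2
  · exfalso
    have hcases : ∀ u : V, u = x ∨ u = y ∨ Z u := by
      intro u
      by_contra hc
      push_neg at hc
      exact hex ⟨u, hc.1, hc.2.1, hc.2.2⟩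
    have hclass : ∀ e ∈ G.edgeSet, e = s(x, y) ∨ ∃ i, e = s(y, z i) := by
      intro e he
      induction e with
      | h a b =>
        rw [SimpleGraph.mem_edgeSet] at he
        rcases hcases a with rfl | rfl | ⟨i, rfl⟩
        · rcases hcases b with rfl | rfl | ⟨i, rfl⟩
          · exact absurd he (G.irrefl)
          · exact Or.inl rfl
          · exact absurd he (hxzAdj i)
        · rcases (hnbr b).mp he with rfl | ⟨i, rfl⟩
          · exact Or.inl (Sym2.eq_swap)
          · exact Or.inr ⟨i, rfl⟩
        · obtain rfl := hziN i b he
          exact Or.inr ⟨i, Sym2.eq_swap⟩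
    have hcard_le : Nat.card G.edgeSet ≤ k + 1 := by
      have hinj : Function.Injective (fun e : G.edgeSet =>
          if h : ∃ i, (e : Sym2 V) = s(y, z i) then some h.choose else (none : Option (Fin k))) := by
        intro e1 e2 h12
        by_cases h1 : ∃ i, (e1 : Sym2 V) = s(y, z i) <;>
          by_cases h2 : ∃ i, (e2 : Sym2 V) = s(y, z i)
        · simp only [dif_pos h1, dif_pos h2, Option.some.injEq] at h12
          apply Subtype.ext
          rw [h1.choose_spec, h2.choose_spec, h12]
        · simp only [dif_pos h1, dif_neg h2] at h12
          exact absurd h12 (Option.some_ne_none _)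
        · simp only [dif_pos h2, dif_neg h1] at h12
          exact absurd h12.symm (Option.some_ne_none _)
        · rcases hclass e1 e1.2 with c1 | ⟨i, hi⟩
          · rcases hclass e2 e2.2 with c2 | ⟨j, hj⟩
            · apply Subtype.ext; rw [c1, c2]
            · exact absurd ⟨j, hj⟩ h2
          · exact absurd ⟨i, hi⟩ h1
      calc Nat.card G.edgeSet ≤ Nat.card (Option (Fin k)) :=
            Nat.card_le_card_of_injective _ hinj
        _ = k + 1 := by simp [Nat.card_eq_fintype_card]
    have hcardV : Fintype.card V = k + 2 := by
      have huniv : (Finset.univ : Finset V) = insert x (insert y (Finset.image z Finset.univ)) := by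
        ext u
        simp only [Finset.mem_univ, true_iff, Finset.mem_insert, Finset.mem_image,
          Finset.mem_univ, true_and]
        rcases hcases u with rfl | rfl | ⟨i, rfl⟩
        · exact Or.inl rfl
        · exact Or.inr (Or.inl rfl)
        · exact Or.inr (Or.inr ⟨i, rfl⟩)
      have hyimg : y ∉ Finset.image z Finset.univ := by
        simp only [Finset.mem_image, Finset.mem_univ, true_and, not_exists]
        exact fun i h => hyz i h.symm
      have hxins : x ∉ insert y (Finset.image z Finset.univ) := by
        simp only [Finset.mem_insert, Finset.mem_image, Finset.mem_univ, true_and, not_or,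
          not_exists]
        exact ⟨hxny, fun i h => hxz i h.symm⟩
      rw [← Finset.card_univ, huniv, Finset.card_insert_of_notMem hxins,
        Finset.card_insert_of_notMem hyimg, Finset.card_image_of_injective _ hz,
        Finset.card_univ, Fintype.card_fin]
    have hedge := hG.2
    omega
end
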